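/- Let Ω be a finite nonempty set and τ₁, τ₂, τ₃ permutations of Ω satisfying (T1), (T2), (T3), (T4), and additionally τ₁³ = τ₂³ = τ₃³ = 1. Then Ω can be partitioned into three pairwise disjoint sets 𝔗₁, 𝔗₂, 𝔗₃ with Ω = 𝔗₁ ∪ 𝔗₂ ∪ 𝔗₃ such that for each i ∈ {1,2,3}, each j ∈ {1,2,3}, and each orbit o of τⱼ on Ω, the set 𝔗ᵢ intersects o in exactly one point. -/

import Mathlib

/-!
Auxiliary theory: the group generated by `a, b` with `a^3 = b^3 = (a*b)^3 = 1`
is a quotient of the (3,3,3) triangle group `ℤ[ω] ⋊ ℤ/3`.  We set up the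
translation subgroup generated by `u = b * a⁻¹` and `v = a * b * a` (which
commute), the normal form `tr m n * a ^ k`, and conjugation formulas.
-/

section TriangleAux

variable {G : Type*} [Group G]

/-- The "translation" `u^m * v^n` where `u = b * a⁻¹`, `v = a * b * a`. -/
private def tr (a b : G) (m n : ℤ) : G := (b * a⁻¹) ^ m * (a * b * a) ^ n

variable {a b : G}

private lemma cube_aux (ha : a ^ 3 = 1) : a * (a * a) = 1 := by
  have h : a ^ 3 = a * (a * a) := by rw [pow_succ, pow_succ, pow_one, mul_assoc]
  rw [← h, ha]

private lemma inv_eq_sq (ha : a ^ 3 = 1) : a⁻¹ = a * a :=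
  inv_eq_of_mul_eq_one_right (cube_aux ha)

private lemma inv_mul_inv_self (ha : a ^ 3 = 1) : a⁻¹ * a⁻¹ = a := by
  calc a⁻¹ * a⁻¹ = a⁻¹ * (a * a) := by rw [← inv_eq_sq ha]
  _ = a := by simp

private lemma tri_vu (ha : a ^ 3 = 1) (hb : b ^ 3 = 1) (hab : (a * b) ^ 3 = 1) :
    (a * b * a) * (b * a⁻¹) = b * b * a := by
  have hab' : (a * b) ^ 3 = (a * b) ^ 2 * (a * b) := by rw [pow_succ]
  have hab2 : (a * b) ^ 2 = (a * b)⁻¹ :=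
    eq_inv_of_mul_eq_one_left (by rw [← hab']; exact hab)
  calc (a * b * a) * (b * a⁻¹) = (a * b) ^ 2 * a⁻¹ := by rw [pow_two]; group
  _ = (a * b)⁻¹ * a⁻¹ := by rw [hab2]
  _ = b⁻¹ * (a⁻¹ * a⁻¹) := by group
  _ = b⁻¹ * a := by rw [inv_mul_inv_self ha]
  _ = b * b * a := by rw [inv_eq_sq hb]

private lemma tri_comm (ha : a ^ 3 = 1) (hb : b ^ 3 = 1) (hab : (a * b) ^ 3 = 1) :
    Commute (b * a⁻¹) (a * b * a) := by
  show (b * a⁻¹) * (a * b * a) = (a * b * a) * (b * a⁻¹)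
  rw [tri_vu ha hb hab]; group

private lemma tr_mul (h : Commute (b * a⁻¹) (a * b * a)) (m n p q : ℤ) :
    tr a b m n * tr a b p q = tr a b (m + p) (n + q) := by
  have hc := (h.symm.zpow_zpow n p).eq
  simp only [tr]
  calc (b * a⁻¹) ^ m * (a * b * a) ^ n * ((b * a⁻¹) ^ p * (a * b * a) ^ q)
      = (b * a⁻¹) ^ m * ((a * b * a) ^ n * (b * a⁻¹) ^ p) * (a * b * a) ^ q := by group
  _ = (b * a⁻¹) ^ m * ((b * a⁻¹) ^ p * (a * b * a) ^ n) * (a * b * a) ^ q := by rw [hc]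
  _ = ((b * a⁻¹) ^ m * (b * a⁻¹) ^ p) * ((a * b * a) ^ n * (a * b * a) ^ q) := by group
  _ = (b * a⁻¹) ^ (m + p) * (a * b * a) ^ (n + q) := by rw [← zpow_add, ← zpow_add]

private lemma tr_inv (h : Commute (b * a⁻¹) (a * b * a)) (m n : ℤ) :
    (tr a b m n)⁻¹ = tr a b (-m) (-n) := by
  simp only [tr]
  rw [mul_inv_rev, ← zpow_neg, ← zpow_neg]
  exact (h.symm.zpow_zpow (-n) (-m)).eq

private lemma conj_u (ha : a ^ 3 = 1) : a * (b * a⁻¹) * a⁻¹ = a * b * a := by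
  calc a * (b * a⁻¹) * a⁻¹ = a * b * (a⁻¹ * a⁻¹) := by group
  _ = a * b * a := by rw [inv_mul_inv_self ha]

private lemma conj_v (ha : a ^ 3 = 1) (hb : b ^ 3 = 1) (hab : (a * b) ^ 3 = 1) :
    a * (a * b * a) * a⁻¹ = ((a * b * a) * (b * a⁻¹))⁻¹ := by
  rw [tri_vu ha hb hab]
  calc a * (a * b * a) * a⁻¹ = (a * a) * b := by group
  _ = a⁻¹ * b := by rw [← inv_eq_sq ha]
  _ = a⁻¹ * (b⁻¹ * b⁻¹) := by rw [inv_mul_inv_self hb]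
  _ = (b * b * a)⁻¹ := by group

private lemma a_tr (ha : a ^ 3 = 1) (hb : b ^ 3 = 1) (hab : (a * b) ^ 3 = 1) (m n : ℤ) :
    a * tr a b m n = tr a b (-n) (m - n) * a := by
  have hcomm := tri_comm ha hb hab
  have h1 : a * (b * a⁻¹) ^ m * a⁻¹ = (a * b * a) ^ m := by
    rw [← conj_zpow, conj_u ha]
  have h2 : a * (a * b * a) ^ n * a⁻¹ = (b * a⁻¹) ^ (-n) * (a * b * a) ^ (-n) := by
    rw [← conj_zpow, conj_v ha hb hab, inv_zpow, ← zpow_neg,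
      hcomm.symm.mul_zpow (-n), (hcomm.zpow_zpow (-n) (-n)).eq]
  have c1 := (hcomm.symm.zpow_zpow m (-n)).eq
  calc a * tr a b m n
      = (a * (b * a⁻¹) ^ m * a⁻¹) * (a * (a * b * a) ^ n * a⁻¹) * a := by
        simp only [tr]; group
  _ = (a * b * a) ^ m * ((b * a⁻¹) ^ (-n) * (a * b * a) ^ (-n)) * a := by rw [h1, h2]
  _ = ((a * b * a) ^ m * (b * a⁻¹) ^ (-n)) * (a * b * a) ^ (-n) * a := by group
  _ = ((b * a⁻¹) ^ (-n) * (a * b * a) ^ m) * (a * b * a) ^ (-n) * a := by rw [c1]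
  _ = (b * a⁻¹) ^ (-n) * ((a * b * a) ^ m * (a * b * a) ^ (-n)) * a := by group
  _ = (b * a⁻¹) ^ (-n) * (a * b * a) ^ (m + -n) * a := by rw [← zpow_add]
  _ = tr a b (-n) (m - n) * a := by rw [← sub_eq_add_neg]; rfl

private lemma inv_a_tr (ha : a ^ 3 = 1) (hb : b ^ 3 = 1) (hab : (a * b) ^ 3 = 1) (m n : ℤ) :
    a⁻¹ * tr a b m n = tr a b (n - m) (-m) * a⁻¹ := by
  have h : a * tr a b (n - m) (-m) = tr a b m n * a := by
    have := a_tr ha hb hab (n - m) (-m)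
    rw [this]
    congr 2 <;> ring
  calc a⁻¹ * tr a b m n = a⁻¹ * (tr a b m n * a) * a⁻¹ := by group
  _ = a⁻¹ * (a * tr a b (n - m) (-m)) * a⁻¹ := by rw [h]
  _ = tr a b (n - m) (-m) * a⁻¹ := by group

private lemma apow_tr (ha : a ^ 3 = 1) (hb : b ^ 3 = 1) (hab : (a * b) ^ 3 = 1) :
    ∀ (k m n : ℤ), ∃ p q : ℤ, a ^ k * tr a b m n = tr a b p q * a ^ k := by
  intro k
  induction k using Int.induction_on with
  | zero => intro m n; exact ⟨m, n, by simp⟩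
  | succ i ih =>
    intro m n
    obtain ⟨p, q, hpq⟩ := ih m n
    refine ⟨-q, p - q, ?_⟩
    calc a ^ ((i : ℤ) + 1) * tr a b m n = a * (a ^ (i : ℤ) * tr a b m n) := by group
    _ = a * (tr a b p q * a ^ (i : ℤ)) := by rw [hpq]
    _ = (a * tr a b p q) * a ^ (i : ℤ) := by group
    _ = (tr a b (-q) (p - q) * a) * a ^ (i : ℤ) := by rw [a_tr ha hb hab]
    _ = tr a b (-q) (p - q) * a ^ ((i : ℤ) + 1) := by group
  | pred i ih =>
    intro m n
    obtain ⟨p, q, hpq⟩ := ih m n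
    refine ⟨q - p, -p, ?_⟩
    calc a ^ (-(i : ℤ) - 1) * tr a b m n = a⁻¹ * (a ^ (-(i : ℤ)) * tr a b m n) := by group
    _ = a⁻¹ * (tr a b p q * a ^ (-(i : ℤ))) := by rw [hpq]
    _ = (a⁻¹ * tr a b p q) * a ^ (-(i : ℤ)) := by group
    _ = (tr a b (q - p) (-p) * a⁻¹) * a ^ (-(i : ℤ)) := by rw [inv_a_tr ha hb hab]
    _ = tr a b (q - p) (-p) * a ^ (-(i : ℤ) - 1) := by group

private lemma tr_conj (ha : a ^ 3 = 1) (hb : b ^ 3 = 1) (hab : (a * b) ^ 3 = 1) (m n p q : ℤ) :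
    tr a b p q * (tr a b m n * a) * (tr a b p q)⁻¹ =
      tr a b (m + p + q) (n + 2 * q - p) * a := by
  have hcomm := tri_comm ha hb hab
  rw [tr_inv hcomm]
  calc tr a b p q * (tr a b m n * a) * tr a b (-p) (-q)
      = tr a b p q * tr a b m n * (a * tr a b (-p) (-q)) := by group
  _ = tr a b p q * tr a b m n * (tr a b (- -q) (-p - -q) * a) := by
      rw [a_tr ha hb hab]
  _ = (tr a b p q * tr a b m n * tr a b (- -q) (-p - -q)) * a := by group
  _ = tr a b (p + m + - -q) (q + n + (-p - -q)) * a := by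
      rw [tr_mul hcomm, tr_mul hcomm]
  _ = tr a b (m + p + q) (n + 2 * q - p) * a := by congr 2 <;> ring

end TriangleAux

/-- Let `τ₁, τ₂, τ₃` be permutations of a finite nonempty set `Ω` satisfying
(T1) `τ₁τ₂τ₃ = 1`, (T2) cycles of distinct `τᵢ`, `τⱼ` meet in at most one point,
(T3) each `τᵢ` is fixed-point free, (T4) `⟨τ₁, τ₂, τ₃⟩` is transitive on `Ω`,
and additionally `τ₁³ = τ₂³ = τ₃³ = 1`. Then `Ω` can be partitioned into three
pairwise disjoint sets `𝔗₁, 𝔗₂, 𝔗₃` each of which meets each orbit of each `τⱼ`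
in exactly one point. -/
theorem partition_into_three_orbit_transversals
    {Ω : Type*} [Finite Ω] [Nonempty Ω] (τ : Fin 3 → Equiv.Perm Ω)
    (hT1 : ∀ x : Ω, τ 2 (τ 1 (τ 0 x)) = x)
    (hT2 : ∀ i j : Fin 3, i ≠ j → ∀ x y : Ω,
      (τ i).SameCycle x y → (τ j).SameCycle x y → x = y)
    (hT3 : ∀ i : Fin 3, ∀ x : Ω, τ i x ≠ x)
    (hT4 : ∀ x y : Ω, ∃ g ∈ Subgroup.closure {τ 0, τ 1, τ 2}, g x = y)
    (hcube : ∀ i : Fin 3, τ i ^ 3 = 1) :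
    ∃ S : Fin 3 → Set Ω,
      (∀ i j : Fin 3, i ≠ j → S i ∩ S j = ∅) ∧
      (S 0 ∪ S 1 ∪ S 2 = Set.univ) ∧
      (∀ i j : Fin 3, ∀ x : Ω, ∃! y : Ω, y ∈ S i ∧ (τ j).SameCycle x y) := by
  classical
  set a := τ 0 with ha_def
  set b := τ 1 with hb_def
  have ha3 : a ^ 3 = 1 := hcube 0
  have hb3 : b ^ 3 = 1 := hcube 1
  have hc3 : (τ 2) ^ 3 = 1 := hcube 2
  have hprod : τ 2 * (b * a) = 1 := by
    ext x
    simp only [Equiv.Perm.mul_apply, Equiv.Perm.one_apply]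
    exact hT1 x
  have hc_eq : τ 2 = (b * a)⁻¹ := eq_inv_of_mul_eq_one_left hprod
  have hba3 : (b * a) ^ 3 = 1 := by
    have h := hc3
    rw [hc_eq, inv_pow, inv_eq_one] at h
    exact h
  have hab3 : (a * b) ^ 3 = 1 := by
    have hba' : (b * a) ^ 3 = (b * a) ^ 2 * (b * a) := by rw [pow_succ]
    have h2 : (b * a) ^ 2 = (b * a)⁻¹ :=
      eq_inv_of_mul_eq_one_left (by rw [← hba']; exact hba3)
    calc (a * b) ^ 3 = a * (b * a) ^ 2 * b := by rw [pow_succ, pow_two, pow_two]; group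
    _ = a * (b * a)⁻¹ * b := by rw [h2]
    _ = 1 := by group
  have hcomm := tri_comm ha3 hb3 hab3
  -- normal forms of the three generators
  have hgen : ∀ j : Fin 3, ∃ p q : ℤ, τ j = tr a b p q * a := by
    intro j
    match j with
    | 0 => exact ⟨0, 0, by simp [tr, ha_def, hb_def]⟩
    | 1 => exact ⟨1, 0, by simp [tr, ha_def, hb_def]⟩
    | 2 =>
      refine ⟨0, -1, ?_⟩
      rw [hc_eq]
      simp only [tr, zpow_zero, one_mul, zpow_neg, zpow_one]
      group
  -- normal form for every element of the closure
  have hNF : ∀ g ∈ Subgroup.closure {τ 0, τ 1, τ 2},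
      ∃ m n k : ℤ, g = tr a b m n * a ^ k := by
    intro g hg
    induction hg using Subgroup.closure_induction with
    | mem x hx =>
      simp only [Set.mem_insert_iff, Set.mem_singleton_iff] at hx
      rcases hx with rfl | rfl | rfl
      · obtain ⟨p, q, h⟩ := hgen 0; exact ⟨p, q, 1, by rw [zpow_one]; exact h⟩
      · obtain ⟨p, q, h⟩ := hgen 1; exact ⟨p, q, 1, by rw [zpow_one]; exact h⟩
      · obtain ⟨p, q, h⟩ := hgen 2; exact ⟨p, q, 1, by rw [zpow_one]; exact h⟩
    | one => exact ⟨0, 0, 0, by simp [tr]⟩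
    | mul x y hx hy ihx ihy =>
      obtain ⟨m, n, k, rfl⟩ := ihx
      obtain ⟨p, q, l, rfl⟩ := ihy
      obtain ⟨p', q', hk⟩ := apow_tr ha3 hb3 hab3 k p q
      refine ⟨m + p', n + q', k + l, ?_⟩
      calc tr a b m n * a ^ k * (tr a b p q * a ^ l)
          = tr a b m n * (a ^ k * tr a b p q) * a ^ l := by group
      _ = tr a b m n * (tr a b p' q' * a ^ k) * a ^ l := by rw [hk]
      _ = (tr a b m n * tr a b p' q') * (a ^ k * a ^ l) := by group
      _ = tr a b (m + p') (n + q') * a ^ (k + l) := by rw [tr_mul hcomm, ← zpow_add]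
    | inv x hx ihx =>
      obtain ⟨m, n, k, rfl⟩ := ihx
      obtain ⟨p', q', hk⟩ := apow_tr ha3 hb3 hab3 (-k) (-m) (-n)
      refine ⟨p', q', -k, ?_⟩
      rw [mul_inv_rev, tr_inv hcomm, ← zpow_neg]
      exact hk
  -- fixed-point freeness in the weight-1 case
  have hfpf1 : ∀ (m n : ℤ) (x : Ω), (tr a b m n * a) x ≠ x := by
    intro m n x hx
    have key : ∃ (p q : ℤ) (j : Fin 3),
        tr a b (m + p + q) (n + 2 * q - p) * a = τ j := by
      rcases (show (m + n) % 3 = 0 ∨ (m + n) % 3 = 1 ∨ (m + n) % 3 = 2 by omega)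
        with h | h | h
      · refine ⟨-m + (m + n) / 3, -((m + n) / 3), 0, ?_⟩
        have e1 : m + (-m + (m + n) / 3) + -((m + n) / 3) = 0 := by ring
        have e2 : n + 2 * -((m + n) / 3) - (-m + (m + n) / 3) = 0 := by omega
        rw [e1, e2]; simp [tr, ha_def, hb_def]
      · refine ⟨1 - m + (m + n - 1) / 3, -((m + n - 1) / 3), 1, ?_⟩
        have e1 : m + (1 - m + (m + n - 1) / 3) + -((m + n - 1) / 3) = 1 := by ring
        have e2 : n + 2 * -((m + n - 1) / 3) - (1 - m + (m + n - 1) / 3) = 0 := by omega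
        rw [e1, e2]; simp [tr, ha_def, hb_def]
      · refine ⟨-m + (m + n + 1) / 3, -((m + n + 1) / 3), 2, ?_⟩
        have e1 : m + (-m + (m + n + 1) / 3) + -((m + n + 1) / 3) = 0 := by ring
        have e2 : n + 2 * -((m + n + 1) / 3) - (-m + (m + n + 1) / 3) = -1 := by omega
        rw [e1, e2, hc_eq]
        simp only [tr, zpow_zero, one_mul, zpow_neg, zpow_one]
        group
    obtain ⟨p, q, j, hj⟩ := key
    have hconj := tr_conj ha3 hb3 hab3 m n p q
    rw [hj] at hconj
    have : τ j ((tr a b p q) x) = (tr a b p q) x := by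
      rw [← hconj]
      simp only [Equiv.Perm.mul_apply, Equiv.Perm.coe_inv, Equiv.symm_apply_apply]
      rw [show tr a b m n (a x) = (tr a b m n * a) x from rfl, hx]
    exact hT3 j _ this
  have ha3z : a ^ (3 : ℤ) = 1 := by
    rw [show (3 : ℤ) = ((3 : ℕ) : ℤ) from rfl, zpow_natCast]; exact ha3
  -- fixed-point freeness for all weights not divisible by 3
  have hfpf : ∀ (m n k : ℤ), ¬ ((3 : ℤ) ∣ k) → ∀ x : Ω, (tr a b m n * a ^ k) x ≠ x := by
    intro m n k hk x hx
    have hred : a ^ k = a ^ (k % 3) := by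
      conv_lhs => rw [show k = 3 * (k / 3) + k % 3 by omega]
      rw [zpow_add, zpow_mul, ha3z, one_zpow, one_mul]
    rcases (show k % 3 = 1 ∨ k % 3 = 2 by omega) with h | h
    · rw [hred, h, zpow_one] at hx
      exact hfpf1 m n x hx
    · rw [hred, h] at hx
      have hx' : ((tr a b m n * a ^ (2 : ℤ))⁻¹) x = x := by
        conv_lhs => rw [← hx]
        simp
      have hm2 : a ^ (-2 : ℤ) = a := by
        rw [show (-2 : ℤ) = 1 + -3 by ring, zpow_add, zpow_neg, ha3z, inv_one,
          mul_one, zpow_one]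
      have hform : (tr a b m n * a ^ (2 : ℤ))⁻¹ = tr a b n (n - m) * a := by
        rw [mul_inv_rev, tr_inv hcomm, ← zpow_neg, hm2]
        have := a_tr ha3 hb3 hab3 (-m) (-n)
        rw [this]
        congr 2 <;> ring
      rw [hform] at hx'
      exact hfpf1 n (n - m) x hx'
  -- the coloring
  obtain ⟨x₀⟩ := ‹Nonempty Ω›
  have hreach : ∀ x : Ω, ∃ k : ℤ, ∃ m n : ℤ, (tr a b m n * a ^ k) x₀ = x := by
    intro x
    obtain ⟨g, hg, hgx⟩ := hT4 x₀ x
    obtain ⟨m, n, k, rfl⟩ := hNF g hg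
    exact ⟨k, m, n, hgx⟩
  have huniq : ∀ (k k' m n m' n' : ℤ),
      (tr a b m n * a ^ k) x₀ = (tr a b m' n' * a ^ k') x₀ →
      ((k : ZMod 3) = (k' : ZMod 3)) := by
    intro k k' m n m' n' h
    by_contra hne
    have hdvd : ¬ ((3 : ℤ) ∣ (k - k')) := by
      intro hd
      obtain ⟨d, hdd⟩ := hd
      exact hne ((ZMod.intCast_eq_intCast_iff k k' 3).2
        ((Int.modEq_iff_dvd).2 ⟨-d, by omega⟩))
    obtain ⟨p', q', hpq⟩ := apow_tr ha3 hb3 hab3 (-k') (-m' + m) (-n' + n)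
    have hcomp : tr a b p' q' * a ^ (k - k') =
        (tr a b m' n' * a ^ k')⁻¹ * (tr a b m n * a ^ k) := by
      rw [mul_inv_rev, tr_inv hcomm, ← zpow_neg]
      symm
      calc a ^ (-k') * tr a b (-m') (-n') * (tr a b m n * a ^ k)
          = a ^ (-k') * (tr a b (-m') (-n') * tr a b m n) * a ^ k := by group
      _ = a ^ (-k') * tr a b (-m' + m) (-n' + n) * a ^ k := by rw [tr_mul hcomm]
      _ = (tr a b p' q' * a ^ (-k')) * a ^ k := by rw [hpq]
      _ = tr a b p' q' * a ^ (-k' + k) := by rw [mul_assoc, ← zpow_add]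
      _ = tr a b p' q' * a ^ (k - k') := by congr 1; ring
    have hgx : (tr a b p' q' * a ^ (k - k')) x₀ = x₀ := by
      rw [hcomp, Equiv.Perm.mul_apply, h, ← Equiv.Perm.mul_apply, inv_mul_cancel,
        Equiv.Perm.one_apply]
    exact hfpf p' q' (k - k') hdvd x₀ hgx
  set col : Ω → ZMod 3 := fun x => (((hreach x).choose : ℤ) : ZMod 3) with hcol_def
  have hcolx : ∀ x : Ω, col x = (((hreach x).choose : ℤ) : ZMod 3) := fun x => by
    rw [hcol_def]
  have hcol : ∀ (k m n : ℤ) (x : Ω),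
      (tr a b m n * a ^ k) x₀ = x → col x = (k : ZMod 3) := by
    intro k m n x hx
    obtain ⟨m', n', hx'⟩ := (hreach x).choose_spec
    rw [hcolx x]
    exact huniq _ k m' n' m n (hx'.trans hx.symm)
  have hstep : ∀ (j : Fin 3) (x : Ω), col (τ j x) = col x + 1 := by
    intro j x
    obtain ⟨m', n', hx'⟩ := (hreach x).choose_spec
    set k := (hreach x).choose with hk_def
    obtain ⟨pj, qj, hj⟩ := hgen j
    have hcomp : tr a b (pj + -n') (qj + (m' - n')) * a ^ (1 + k) =
        τ j * (tr a b m' n' * a ^ k) := by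
      rw [hj]
      calc tr a b (pj + -n') (qj + (m' - n')) * a ^ (1 + k)
          = (tr a b pj qj * tr a b (-n') (m' - n')) * (a * a ^ k) := by
            rw [tr_mul hcomm, zpow_add, zpow_one]
      _ = tr a b pj qj * (tr a b (-n') (m' - n') * a) * a ^ k := by group
      _ = tr a b pj qj * (a * tr a b m' n') * a ^ k := by rw [← a_tr ha3 hb3 hab3]
      _ = tr a b pj qj * a * (tr a b m' n' * a ^ k) := by group
    have happ : (tr a b (pj + -n') (qj + (m' - n')) * a ^ (1 + k)) x₀ = τ j x := by
      rw [hcomp, Equiv.Perm.mul_apply, hx']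
    have := hcol (1 + k) _ _ _ happ
    rw [this, hcolx x]
    push_cast
    exact add_comm _ _
  have hpow : ∀ (j : Fin 3) (s : ℤ) (x : Ω),
      col ((τ j ^ s) x) = col x + (s : ZMod 3) := by
    intro j s x
    induction s using Int.induction_on with
    | zero => simp
    | succ i ih =>
      have happ : (τ j ^ ((i : ℤ) + 1)) x = τ j ((τ j ^ (i : ℤ)) x) := by
        rw [show ((i : ℤ) + 1) = 1 + (i : ℤ) by ring, zpow_add, zpow_one,
          Equiv.Perm.mul_apply]
      rw [happ, hstep, ih]
      push_cast
      ring
    | pred i ih =>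
      have hexp : 1 + (-(i : ℤ) - 1) = -(i : ℤ) := by ring
      have happ : τ j ((τ j ^ (-(i : ℤ) - 1)) x) = (τ j ^ (-(i : ℤ))) x := by
        conv_rhs => rw [← hexp]
        rw [zpow_add, zpow_one, Equiv.Perm.mul_apply]
      have h2 := hstep j ((τ j ^ (-(i : ℤ) - 1)) x)
      rw [happ, ih] at h2
      push_cast at h2 ⊢
      linear_combination -h2
  -- the three transversals
  have hinj : ∀ i j : Fin 3, (((i : ℕ) : ZMod 3) = ((j : ℕ) : ZMod 3)) → i = j := by
    decide
  refine ⟨fun i => {x : Ω | col x = ((i : ℕ) : ZMod 3)}, ?_, ?_, ?_⟩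
  · intro i j hij
    ext x
    simp only [Set.mem_inter_iff, Set.mem_setOf_eq, Set.mem_empty_iff_false, iff_false,
      not_and]
    intro h1 h2
    exact hij (hinj i j (h1.symm.trans h2))
  · ext x
    simp only [Set.mem_union, Set.mem_setOf_eq, Set.mem_univ, iff_true]
    have h : col x = 0 ∨ col x = 1 ∨ col x = 2 := by
      generalize col x = z
      revert z
      decide
    rcases h with h | h | h
    · left; left; rw [h]; decide
    · left; right; rw [h]; decide
    · right; rw [h]; decide
  · intro i j x
    set z : ZMod 3 := ((i : ℕ) : ZMod 3) - col x with hz_def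
    set s : ℤ := (z.val : ℤ) with hs_def
    have hsz : ((s : ℤ) : ZMod 3) = z := by
      rw [hs_def]
      push_cast
      rw [ZMod.natCast_val, ZMod.cast_id]
    have hτ3 : (τ j) ^ (3 : ℤ) = 1 := by
      rw [show (3 : ℤ) = ((3 : ℕ) : ℤ) from rfl, zpow_natCast]; exact hcube j
    refine ⟨(τ j ^ s) x, ⟨?_, ⟨s, rfl⟩⟩, ?_⟩
    · show col ((τ j ^ s) x) = ((i : ℕ) : ZMod 3)
      rw [hpow, hsz, hz_def]
      ring
    · rintro y ⟨hy1, t, rfl⟩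
      have hy1' : col x + (t : ZMod 3) = ((i : ℕ) : ZMod 3) := by
        rw [← hpow j t x]
        exact hy1
      have hts : (t : ZMod 3) = (s : ZMod 3) := by
        rw [hsz, hz_def]
        linear_combination hy1'
      have hdvd : (3 : ℤ) ∣ (t - s) := by
        have hmod := (ZMod.intCast_eq_intCast_iff t s 3).1 hts
        have := Int.ModEq.dvd hmod
        omega
      obtain ⟨d, hd⟩ := hdvd
      rw [show t = s + 3 * d by omega, zpow_add, zpow_mul, hτ3, one_zpow, mul_one]
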